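/- Let n = 2m and K_n have probability mass function p(r) = 2^{-(2m-r)}·C(2m-r, m) for r = 0,...,m. Then for every r, P(K_n = r) ≤ sqrt(2)/sqrt(π m) = 2/sqrt(π n). -/

import Mathlib

/-- The pmf of the number of returns to the origin of simple random walk up to time `2m`:
`p r = 2^{-(2m-r)} * C(2m-r, m)`. -/
noncomputable def returnsPMF (m r : ℕ) : ℝ := (Nat.choose (2*m - r) m : ℝ) / 2^(2*m - r)

lemma step2 (m k : ℕ) (hk : k + 1 ≤ m) :
    2 * Nat.choose (m + k) m ≤ Nat.choose (m + k + 1) m := by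
  have h := Nat.add_one_mul_choose_eq (m + k) k
  have hs : (m + k).choose k = (m + k).choose m := by
    rw [← Nat.choose_symm (by omega : k ≤ m + k)]
    congr 1; omega
  have hs2 : (m + k + 1).choose (k + 1) = (m + k + 1).choose m := by
    rw [← Nat.choose_symm (by omega : k + 1 ≤ m + k + 1)]
    congr 1; omega
  rw [hs, hs2] at h
  have : 2 * (k + 1) * Nat.choose (m + k) m ≤ (k + 1) * Nat.choose (m + k + 1) m := by
    calc 2 * (k + 1) * Nat.choose (m + k) m ≤ (m + k + 1) * Nat.choose (m + k) m :=
          Nat.mul_le_mul_right _ (by omega)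
      _ = (k + 1) * Nat.choose (m + k + 1) m := by
          linarith
  have := Nat.le_of_mul_le_mul_left (by linarith [this] : (k+1) * (2 * Nat.choose (m+k) m) ≤ (k+1) * Nat.choose (m+k+1) m) (by omega)
  exact this

lemma mono (m : ℕ) : ∀ j, j ≤ m → 2 ^ j * Nat.choose (2*m - j) m ≤ Nat.choose (2*m) m := by
  intro j
  induction j with
  | zero => intro _; simp
  | succ j ih =>
    intro hj
    have hk : (m - j - 1) + 1 ≤ m := by omega
    have h2 := step2 m (m - j - 1) hk
    have e1 : 2*m - (j+1) = m + (m - j - 1) := by omega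
    have e2 : 2*m - j = m + (m - j - 1) + 1 := by omega
    calc 2 ^ (j+1) * Nat.choose (2*m - (j+1)) m
        = 2 ^ j * (2 * Nat.choose (m + (m - j - 1)) m) := by rw [e1]; ring
      _ ≤ 2 ^ j * Nat.choose (2*m - j) m := by
          rw [e2]; exact Nat.mul_le_mul_left _ h2
      _ ≤ Nat.choose (2*m) m := ih (by omega)

lemma cb_sq (m : ℕ) : (Nat.choose (2*m) m)^2 * (3*m + 1) ≤ 16 ^ m := by
  induction m with
  | zero => simp
  | succ m ih =>
    have h := Nat.succ_mul_centralBinom_succ m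
    unfold Nat.centralBinom at h
    have h2 : ((m+1) * Nat.choose (2*(m+1)) (m+1))^2 = (2*(2*m+1) * Nat.choose (2*m) m)^2 := by
      rw [h]
    have key : (m+1)^2 * ((Nat.choose (2*(m+1)) (m+1))^2 * (3*(m+1) + 1)) ≤ (m+1)^2 * 16^(m+1) := by
      have expand : (m+1)^2 * ((Nat.choose (2*(m+1)) (m+1))^2 * (3*(m+1)+1))
          = 4*(2*m+1)^2*(3*m+4) * (Nat.choose (2*m) m)^2 := by
        nlinarith [h2]
      rw [expand]
      calc 4*(2*m+1)^2*(3*m+4) * (Nat.choose (2*m) m)^2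
          ≤ 16*(m+1)^2*(3*m+1) * (Nat.choose (2*m) m)^2 := by
            apply Nat.mul_le_mul_right; nlinarith
        _ = (m+1)^2 * (16 * ((Nat.choose (2*m) m)^2 * (3*m+1))) := by ring
        _ ≤ (m+1)^2 * (16 * 16^m) := by
            apply Nat.mul_le_mul_left; exact Nat.mul_le_mul_left _ ih
        _ = (m+1)^2 * 16^(m+1) := by ring
    exact Nat.le_of_mul_le_mul_left key (by positivity)

theorem stmt17 (m : ℕ) (hm : 0 < m) :
    (∀ r : ℕ, r ≤ m → returnsPMF m r ≤ Real.sqrt 2 / Real.sqrt (Real.pi * m)) ∧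
    Real.sqrt 2 / Real.sqrt (Real.pi * m) = 2 / Real.sqrt (Real.pi * (2*m)) := by
  constructor
  · intro r hr
    -- returnsPMF m r ≤ C(2m,m)/4^m
    have h1 : returnsPMF m r ≤ (Nat.choose (2*m) m : ℝ) / 4^m := by
      unfold returnsPMF
      rw [div_le_div_iff₀ (by positivity) (by positivity)]
      have := mono m r hr
      have hcast : (2:ℝ)^r * (Nat.choose (2*m - r) m : ℝ) ≤ (Nat.choose (2*m) m : ℝ) := by
        exact_mod_cast this
      have hpow : (4:ℝ)^m = 2^r * 2^(2*m - r) := by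
        rw [← pow_add, show r + (2*m - r) = 2*m by omega, show (4:ℝ) = 2^2 by norm_num, ← pow_mul]
      nlinarith [pow_pos (show (0:ℝ) < 2 by norm_num) (2*m - r), hcast,
        pow_pos (show (0:ℝ) < 2 by norm_num) r]
    -- C(2m,m)/4^m ≤ 1/sqrt(3m+1)
    have h2 : (Nat.choose (2*m) m : ℝ) / 4^m ≤ 1 / Real.sqrt (3*m + 1) := by
      have hc := cb_sq m
      have hcR : ((Nat.choose (2*m) m : ℝ))^2 * (3*m + 1) ≤ 16^m := by exact_mod_cast hc
      have h3 : (0:ℝ) < 3*m + 1 := by positivity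
      rw [div_le_div_iff₀ (by positivity) (Real.sqrt_pos.mpr h3)]
      have : ((Nat.choose (2*m) m : ℝ) * Real.sqrt (3*m+1))^2 ≤ ((4:ℝ)^m)^2 := by
        rw [mul_pow, Real.sq_sqrt (le_of_lt h3)]
        calc ((Nat.choose (2*m) m : ℝ))^2 * (3*m+1) ≤ 16^m := hcR
          _ = ((4:ℝ)^m)^2 := by rw [show (16:ℝ) = 4^2 by norm_num, ← pow_mul, ← pow_mul, Nat.mul_comm]
      rw [one_mul]; exact le_of_sq_le_sq this (by positivity)
    have h4 : (1:ℝ) / Real.sqrt (3*m + 1) ≤ Real.sqrt 2 / Real.sqrt (Real.pi * m) := by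
      have hpim : (0:ℝ) < Real.pi * m := by
        have : (0:ℝ) < m := by exact_mod_cast hm
        positivity
      rw [div_le_div_iff₀ (Real.sqrt_pos.mpr (by positivity)) (Real.sqrt_pos.mpr hpim)]
      rw [one_mul, ← Real.sqrt_mul (by norm_num : (0:ℝ) ≤ 2)]
      apply Real.sqrt_le_sqrt
      have hm1 : (1:ℝ) ≤ m := by exact_mod_cast hm
      nlinarith [Real.pi_le_four]
    linarith
  · have hpim : (0:ℝ) < Real.pi * m := by
      have : (0:ℝ) < m := by exact_mod_cast hm
      positivity
    have : Real.sqrt (Real.pi * (2*m)) = Real.sqrt 2 * Real.sqrt (Real.pi * m) := by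
      rw [← Real.sqrt_mul (by norm_num : (0:ℝ) ≤ 2)]
      ring_nf
    rw [this]
    have hs : (0:ℝ) < Real.sqrt (Real.pi * m) := Real.sqrt_pos.mpr hpim
    rw [div_eq_div_iff (ne_of_gt hs) (by positivity)]
    rw [← mul_assoc, Real.mul_self_sqrt (by norm_num)]
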